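/- Let (X, μ) be a probability space and T : X → X a measure-preserving transformation. Let p > 2, let f : X → ℝ be measurable, and suppose there exists C > 0 such that ‖S_n f‖_{L^p(μ)} ≤ C·√n for every n ≥ 1, where S_n f = Σ_{k=0}^{n−1} f ∘ T^k. Define M_n f(x) = max_{1 ≤ k ≤ n} |S_k f(x)|. Then there exists a constant K > 0 such that for every n ≥ 2, ‖M_n f‖_{L^p(μ)} ≤ K·(log n)^{(p−1)/p}·√n. -/

import Mathlib

open MeasureTheory Real Filter Topology
open scoped NNReal ENNReal

/-- Maximal inequality: if `‖S_n f‖_p ≤ C √n` for all `n ≥ 1` (with `p > 2`), then the maximal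
function `M_n f = max_{1 ≤ k ≤ n} |S_k f|` satisfies `‖M_n f‖_p ≤ K (log n)^{(p-1)/p} √n`. -/
theorem stmt19 {X : Type*} [MeasurableSpace X] (μ : Measure X) [IsProbabilityMeasure μ]
    (T : X → X) (hT : MeasurePreserving T μ μ)
    (p : ℝ) (hp : 2 < p) (f : X → ℝ) (hf : Measurable f) (C : ℝ) (hC : 0 < C)
    (hbound : ∀ n : ℕ, 1 ≤ n →
      eLpNorm (fun x => ∑ k ∈ Finset.range n, f (T^[k] x)) (ENNReal.ofReal p) μ ≤
        ENNReal.ofReal (C * Real.sqrt n)) :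
    ∃ K : ℝ, 0 < K ∧ ∀ n : ℕ, 2 ≤ n →
      eLpNorm (fun x => ⨆ k : Fin n, |∑ j ∈ Finset.range (k.1 + 1), f (T^[j] x)|)
          (ENNReal.ofReal p) μ ≤
        ENNReal.ofReal (K * (Real.log n) ^ ((p - 1) / p) * Real.sqrt n) := by
  have hp0 : (0:ℝ) < p := by linarith
  set q : ℝ≥0∞ := ENNReal.ofReal p with hq
  have hq0 : q ≠ 0 := by
    simpa [hq] using (ENNReal.ofReal_pos.mpr hp0).ne'
  have hqtop : q ≠ ∞ := ENNReal.ofReal_ne_top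
  have hqp : q.toReal = p := ENNReal.toReal_ofReal hp0.le
  set S : ℕ → X → ℝ := fun n x => ∑ k ∈ Finset.range n, f (T^[k] x) with hS
  set M : ℕ → X → ℝ := fun n x => ⨆ k : Fin n, |S (k.1 + 1) x| with hM
  have hTm : ∀ n, Measurable (T^[n]) := fun n => hT.measurable.iterate n
  have hSm : ∀ n, Measurable (S n) := fun n =>
    Finset.measurable_sum _ (fun k _ => hf.comp (hTm k))
  have hMm : ∀ n, Measurable (M n) := fun n =>
    Measurable.iSup (fun k => (hSm (k.1 + 1)).abs)
  have hbdd : ∀ n x, BddAbove (Set.range fun k : Fin n => |S (k.1 + 1) x|) := fun n x =>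
    (Set.finite_range _).bddAbove
  have hMnonneg : ∀ n, 1 ≤ n → ∀ x, 0 ≤ M n x := by
    intro n hn x
    exact (abs_nonneg _).trans (le_ciSup (hbdd n x) (⟨0, hn⟩ : Fin n))
  have hMmono : ∀ m n, 1 ≤ m → m ≤ n → ∀ x, M m x ≤ M n x := by
    intro m n h1m hmn x
    haveI : Nonempty (Fin m) := ⟨⟨0, h1m⟩⟩
    exact ciSup_le fun k => le_ciSup (hbdd n x) ⟨k.1, lt_of_lt_of_le k.2 hmn⟩
  have hcoc : ∀ n m x, S (n + m) x = S n x + S m (T^[n] x) := by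
    intro n m x
    simp only [hS]
    rw [Finset.sum_range_add]
    congr 1
    refine Finset.sum_congr rfl fun i _ => ?_
    rw [add_comm n i, Function.iterate_add_apply]
  -- pointwise recursion
  have hpt : ∀ n, 1 ≤ n → ∀ x, M (2 * n) x ≤ max (M n x) (|S n x| + M n (T^[n] x)) := by
    intro n hn x
    haveI : Nonempty (Fin (2 * n)) := ⟨⟨0, by omega⟩⟩
    apply ciSup_le
    intro k
    rcases le_or_gt (k.1 + 1) n with hk | hk
    · exact le_max_of_le_left (le_ciSup (hbdd n x) ⟨k.1, hk⟩)
    · have hk2 : k.1 < 2 * n := k.2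
      set m := k.1 + 1 - n with hm
      have hm1 : 1 ≤ m := by omega
      have hmn : m ≤ n := by omega
      have hdecomp : k.1 + 1 = n + m := by omega
      have h1 : |S (k.1 + 1) x| ≤ |S n x| + |S m (T^[n] x)| := by
        rw [hdecomp, hcoc]; exact abs_add_le _ _
      have h2 : |S m (T^[n] x)| ≤ M n (T^[n] x) := by
        have := le_ciSup (hbdd n (T^[n] x)) (⟨m - 1, by omega⟩ : Fin n)
        simpa [Nat.sub_add_cancel hm1] using this
      exact le_max_of_le_right (h1.trans (add_le_add_right h2 _))
  set a : ℕ → ℝ≥0∞ := fun n => eLpNorm (M n) q μ with ha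
  have hSbound : ∀ n, 1 ≤ n → eLpNorm (S n) q μ ≤ ENNReal.ofReal (C * Real.sqrt n) := by
    intro n hn
    exact hbound n hn
  -- the eLpNorm recursion
  have key : ∀ n, 1 ≤ n →
      a (2 * n) ≤ (2 : ℝ≥0∞) ^ (1 / p) * (a n + ENNReal.ofReal (C * Real.sqrt n)) := by
    intro n hn
    set v : X → ℝ := fun x => |S n x| + M n (T^[n] x) with hv
    have hvm : Measurable v := ((hSm n).abs).add ((hMm n).comp (hTm n))
    have hvnonneg : ∀ x, 0 ≤ v x := fun x =>
      add_nonneg (abs_nonneg _) (hMnonneg n hn _)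
    set A := eLpNorm (M n) q μ with hA
    set B := eLpNorm v q μ with hB
    -- B ≤ c + A
    have hBle : B ≤ ENNReal.ofReal (C * Real.sqrt n) + A := by
      have h1 : B ≤ eLpNorm (fun x => |S n x|) q μ + eLpNorm (fun x => M n (T^[n] x)) q μ := by
        apply eLpNorm_add_le ((hSm n).abs).aestronglyMeasurable
          ((hMm n).comp (hTm n)).aestronglyMeasurable
        exact ENNReal.one_le_ofReal.mpr (by linarith)
      have h2 : eLpNorm (fun x => |S n x|) q μ = eLpNorm (S n) q μ := by
        simp only [← Real.norm_eq_abs]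
        exact eLpNorm_norm (S n)
      have h3 : eLpNorm (fun x => M n (T^[n] x)) q μ = A := by
        exact eLpNorm_comp_measurePreserving (hMm n).aestronglyMeasurable (hT.iterate n)
      calc B ≤ eLpNorm (fun x => |S n x|) q μ + eLpNorm (fun x => M n (T^[n] x)) q μ := h1
        _ = eLpNorm (S n) q μ + A := by rw [h2, h3]
        _ ≤ ENNReal.ofReal (C * Real.sqrt n) + A := add_le_add_left (hSbound n hn) _
    -- a (2n) ^ p ≤ A^p + B^p
    have hmaxle : a (2 * n) ≤ (A ^ p + B ^ p) ^ (1 / p) := by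
      have hstep1 : a (2 * n) ≤ eLpNorm (fun x => max (M n x) (v x)) q μ := by
        apply eLpNorm_mono
        intro x
        rw [Real.norm_eq_abs, Real.norm_eq_abs,
          abs_of_nonneg (hMnonneg (2 * n) (by omega) x),
          abs_of_nonneg ((hvnonneg x).trans (le_max_right _ _))]
        exact hpt n hn x
      have hpow : ∀ g : X → ℝ, eLpNorm g q μ ^ p = ∫⁻ x, (‖g x‖₊ : ℝ≥0∞) ^ p ∂μ := by
        intro g
        rw [eLpNorm_eq_lintegral_rpow_enorm_toReal hq0 hqtop, hqp, ← ENNReal.rpow_mul,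
          one_div_mul_cancel hp0.ne', ENNReal.rpow_one]
        rfl
      have hstep2 : eLpNorm (fun x => max (M n x) (v x)) q μ ≤ (A ^ p + B ^ p) ^ (1 / p) := by
        rw [eLpNorm_eq_lintegral_rpow_enorm_toReal hq0 hqtop, hqp]
        apply ENNReal.rpow_le_rpow _ (by positivity)
        have hptwise : ∀ x, (‖max (M n x) (v x)‖₊ : ℝ≥0∞) ^ p ≤
            (‖M n x‖₊ : ℝ≥0∞) ^ p + (‖v x‖₊ : ℝ≥0∞) ^ p := by
          intro x
          rcases max_cases (M n x) (v x) with ⟨h, _⟩ | ⟨h, _⟩ <;> rw [h]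
          · exact le_self_add
          · exact le_add_self
        calc ∫⁻ x, (‖max (M n x) (v x)‖₊ : ℝ≥0∞) ^ p ∂μ
            ≤ ∫⁻ x, ((‖M n x‖₊ : ℝ≥0∞) ^ p + (‖v x‖₊ : ℝ≥0∞) ^ p) ∂μ :=
              lintegral_mono fun x => hptwise x
          _ = (∫⁻ x, (‖M n x‖₊ : ℝ≥0∞) ^ p ∂μ) + ∫⁻ x, (‖v x‖₊ : ℝ≥0∞) ^ p ∂μ :=
              lintegral_add_left ((hMm n).enorm.pow_const p) _
          _ = A ^ p + B ^ p := by rw [hpow (M n), hpow v]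
      exact hstep1.trans hstep2
    -- conclude
    have hfin : A ^ p + B ^ p ≤ 2 * (A + ENNReal.ofReal (C * Real.sqrt n)) ^ p := by
      have h1 : A ^ p ≤ (A + ENNReal.ofReal (C * Real.sqrt n)) ^ p :=
        ENNReal.rpow_le_rpow le_self_add hp0.le
      have h2 : B ^ p ≤ (A + ENNReal.ofReal (C * Real.sqrt n)) ^ p := by
        apply ENNReal.rpow_le_rpow _ hp0.le
        calc B ≤ ENNReal.ofReal (C * Real.sqrt n) + A := hBle
          _ = A + ENNReal.ofReal (C * Real.sqrt n) := add_comm _ _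
      calc A ^ p + B ^ p ≤ (A + ENNReal.ofReal (C * Real.sqrt n)) ^ p +
            (A + ENNReal.ofReal (C * Real.sqrt n)) ^ p := add_le_add h1 h2
        _ = 2 * (A + ENNReal.ofReal (C * Real.sqrt n)) ^ p := (two_mul _).symm
    calc a (2 * n) ≤ (A ^ p + B ^ p) ^ (1 / p) := hmaxle
      _ ≤ (2 * (A + ENNReal.ofReal (C * Real.sqrt n)) ^ p) ^ (1 / p) :=
          ENNReal.rpow_le_rpow hfin (by positivity)
      _ = (2 : ℝ≥0∞) ^ (1 / p) * (A + ENNReal.ofReal (C * Real.sqrt n)) := by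
          rw [ENNReal.mul_rpow_of_nonneg _ _ (by positivity), ← ENNReal.rpow_mul,
            mul_one_div_cancel hp0.ne', ENNReal.rpow_one]
  -- constants
  set ε : ℝ := Real.sqrt 2 - 2 ^ (1 / p) with hε
  have h2p1 : (1:ℝ) ≤ 2 ^ (1 / p) := Real.one_le_rpow one_le_two (by positivity)
  have hεpos : 0 < ε := by
    have h1 : (2:ℝ) ^ (1 / p) < 2 ^ (1 / (2:ℝ)) := by
      apply Real.rpow_lt_rpow_of_exponent_lt one_lt_two
      rw [one_div, one_div]
      exact inv_strictAnti₀ (by norm_num) hp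
    rw [hε, Real.sqrt_eq_rpow]
    linarith
  set K₀ : ℝ := 2 ^ (1 / p) * C / ε with hK₀
  have hK₀pos : 0 < K₀ := div_pos (mul_pos (Real.rpow_pos_of_pos two_pos _) hC) hεpos
  have hεle : ε ≤ 2 ^ (1 / p) := by
    have hsqrt2 : Real.sqrt 2 ≤ 2 := by
      nlinarith [Real.sq_sqrt (show (0:ℝ) ≤ 2 by norm_num), Real.sqrt_nonneg 2]
    rw [hε]; linarith
  have hCK₀ : C ≤ K₀ := by
    rw [hK₀, le_div_iff₀ hεpos]
    nlinarith
  have hkey_real : 2 ^ (1 / p) * (K₀ + C) = K₀ * Real.sqrt 2 := by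
    have hKε : K₀ * ε = 2 ^ (1 / p) * C := by
      rw [hK₀]; field_simp
    rw [hε] at hKε
    nlinarith
  have hsqpow : ∀ L : ℕ, Real.sqrt ((2:ℝ) ^ L) = Real.sqrt 2 ^ L := by
    intro L
    induction L with
    | zero => simp
    | succ L ih => rw [pow_succ, pow_succ, Real.sqrt_mul (by positivity), ih]
  -- dyadic induction
  have hbase : a 1 ≤ ENNReal.ofReal C := by
    have hM1 : M 1 = fun x => |S 1 x| := by
      funext x
      simp only [hM]
      exact ciSup_unique
    have : a 1 = eLpNorm (S 1) q μ := by
      rw [ha]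
      simp only [hM1, ← Real.norm_eq_abs]
      exact eLpNorm_norm (S 1)
    rw [this]
    have := hSbound 1 le_rfl
    simpa using this
  have hdyadic : ∀ L : ℕ, a (2 ^ L) ≤ ENNReal.ofReal (K₀ * Real.sqrt 2 ^ L) := by
    intro L
    induction L with
    | zero =>
      simpa using hbase.trans (ENNReal.ofReal_le_ofReal hCK₀)
    | succ L ih =>
      have h2L : (2:ℕ) ^ (L + 1) = 2 * 2 ^ L := by ring
      rw [h2L]
      have h1 := key (2 ^ L) (Nat.one_le_two_pow)
      have hc : ENNReal.ofReal (C * Real.sqrt ((2:ℕ) ^ L : ℕ)) =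
          ENNReal.ofReal (C * Real.sqrt 2 ^ L) := by
        congr 1
        rw [← hsqpow L]
        congr 1
        push_cast
        ring
      calc a (2 * 2 ^ L) ≤ (2 : ℝ≥0∞) ^ (1 / p) *
            (a (2 ^ L) + ENNReal.ofReal (C * Real.sqrt ((2:ℕ) ^ L : ℕ))) := h1
        _ ≤ (2 : ℝ≥0∞) ^ (1 / p) * (ENNReal.ofReal (K₀ * Real.sqrt 2 ^ L) +
            ENNReal.ofReal (C * Real.sqrt 2 ^ L)) := by
            apply mul_le_mul_right
            rw [hc]
            exact add_le_add_left ih _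
        _ = ENNReal.ofReal (2 ^ (1 / p) * ((K₀ + C) * Real.sqrt 2 ^ L)) := by
            rw [← ENNReal.ofReal_add (by positivity) (by positivity),
              show (2:ℝ≥0∞) = ENNReal.ofReal (2:ℝ) by simp,
              ENNReal.ofReal_rpow_of_pos two_pos, ← ENNReal.ofReal_mul (by positivity)]
            congr 1
            ring
        _ = ENNReal.ofReal (K₀ * Real.sqrt 2 ^ (L + 1)) := by
            congr 1
            rw [← mul_assoc, hkey_real, pow_succ]
            ring
  -- final constant
  set e : ℝ := (p - 1) / p with he
  have he0 : 0 ≤ e := by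
    rw [he]; exact div_nonneg (by linarith) hp0.le
  have hlog2pos : 0 < Real.log 2 := Real.log_pos one_lt_two
  have hlog2e : 0 < Real.log 2 ^ e := Real.rpow_pos_of_pos hlog2pos _
  refine ⟨K₀ * Real.sqrt 2 / Real.log 2 ^ e, by positivity, ?_⟩
  intro n hn
  set L : ℕ := Nat.log 2 n + 1 with hL
  have hn1 : 1 ≤ n := by omega
  have hnL : n ≤ 2 ^ L := (Nat.lt_pow_succ_log_self one_lt_two n).le
  have hL2n : (2:ℕ) ^ L ≤ 2 * n := by
    have h := Nat.pow_log_le_self 2 (show n ≠ 0 by omega)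
    calc (2:ℕ) ^ L = 2 * 2 ^ Nat.log 2 n := by rw [hL]; ring
      _ ≤ 2 * n := by omega
  have hgoal_eq : (fun x => ⨆ k : Fin n, |∑ j ∈ Finset.range (k.1 + 1), f (T^[j] x)|)
      = M n := by
    rw [hM, hS]
  rw [hgoal_eq]
  have h1 : a n ≤ a (2 ^ L) := by
    apply eLpNorm_mono
    intro x
    rw [Real.norm_eq_abs, Real.norm_eq_abs, abs_of_nonneg (hMnonneg n hn1 x),
      abs_of_nonneg (hMnonneg (2 ^ L) Nat.one_le_two_pow x)]
    exact hMmono n (2 ^ L) hn1 hnL x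
  have h2 : a (2 ^ L) ≤ ENNReal.ofReal (K₀ * Real.sqrt 2 ^ L) := hdyadic L
  have h3 : K₀ * Real.sqrt 2 ^ L ≤ K₀ * (Real.sqrt 2 * Real.sqrt n) := by
    apply mul_le_mul_of_nonneg_left _ hK₀pos.le
    rw [← hsqpow L, ← Real.sqrt_mul (by norm_num : (0:ℝ) ≤ 2)]
    apply Real.sqrt_le_sqrt
    calc ((2:ℝ) ^ L) = ((2 ^ L : ℕ) : ℝ) := by push_cast; ring
      _ ≤ ((2 * n : ℕ) : ℝ) := by exact_mod_cast hL2n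
      _ = 2 * (n:ℝ) := by push_cast; ring
  have h4 : K₀ * (Real.sqrt 2 * Real.sqrt n) ≤
      K₀ * Real.sqrt 2 / Real.log 2 ^ e * Real.log n ^ e * Real.sqrt n := by
    have hloge : Real.log 2 ^ e ≤ Real.log n ^ e := by
      apply Real.rpow_le_rpow hlog2pos.le _ he0
      apply Real.log_le_log (by norm_num)
      exact_mod_cast hn
    have hkk : K₀ * Real.sqrt 2 ≤ K₀ * Real.sqrt 2 / Real.log 2 ^ e * Real.log n ^ e := by
      have h := mul_le_mul_of_nonneg_left hloge
        (show (0:ℝ) ≤ K₀ * Real.sqrt 2 / Real.log 2 ^ e by positivity)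
      rwa [div_mul_cancel₀ _ hlog2e.ne'] at h
    calc K₀ * (Real.sqrt 2 * Real.sqrt n) = K₀ * Real.sqrt 2 * Real.sqrt n := by ring
      _ ≤ K₀ * Real.sqrt 2 / Real.log 2 ^ e * Real.log n ^ e * Real.sqrt n := by
          apply mul_le_mul_of_nonneg_right hkk (Real.sqrt_nonneg _)
  calc eLpNorm (M n) q μ ≤ a (2 ^ L) := h1
    _ ≤ ENNReal.ofReal (K₀ * Real.sqrt 2 ^ L) := h2
    _ ≤ ENNReal.ofReal (K₀ * Real.sqrt 2 / Real.log 2 ^ e * Real.log n ^ e * Real.sqrt n) :=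
        ENNReal.ofReal_le_ofReal (h3.trans h4)
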